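/- arXiv:2506.06543 — 6 statements merged into one kernel-verified Lean document; each statement's English description precedes it below -/
import Mathlib

section
/- Let ā > 0, d̄, s, u₀ ∈ ℝ, P ∈ ℕ, and coefficients a₀, …, a_P ∈ ℝ. Define u : ℝ → ℝ by u(τ) = (u₀ − s/(2ā) − (d̄/ā)·Σ_{p=0}^{P} (a_p/2)·(−1)^p · p!/(2ā)^p) · e^{−2āτ} + (d̄/ā)·Σ_{p=0}^{P} (a_p/2)·Σ_{q=0}^{p} τ^{p−q}·(−1)^q · p!/((2ā)^q (p−q)!) + s/(2ā). Then u is differentiable, u(0) = u₀, and for all τ, u'(τ) = d̄·Σ_{p=0}^{P} a_p τ^p − 2ā·u(τ) + s. -/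
open Real Finset

lemma gderiv (b : ℝ) (hb : b ≠ 0) (p : ℕ) (τ : ℝ) :
    HasDerivAt (fun t : ℝ => ∑ q ∈ Finset.range (p+1),
        t ^ (p - q) * (-1:ℝ) ^ q * (Nat.factorial p : ℝ) /
          (b ^ q * (Nat.factorial (p - q) : ℝ)))
      (b * τ ^ p - b * ∑ q ∈ Finset.range (p+1),
        τ ^ (p - q) * (-1:ℝ) ^ q * (Nat.factorial p : ℝ) /
          (b ^ q * (Nat.factorial (p - q) : ℝ))) τ := by
  have h1 : HasDerivAt (fun t : ℝ => ∑ q ∈ Finset.range (p+1),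
        t ^ (p - q) * (-1:ℝ) ^ q * (Nat.factorial p : ℝ) /
          (b ^ q * (Nat.factorial (p - q) : ℝ)))
      (∑ q ∈ Finset.range (p+1),
        ((p - q : ℕ) : ℝ) * τ ^ (p - q - 1) * (-1:ℝ) ^ q * (Nat.factorial p : ℝ) /
          (b ^ q * (Nat.factorial (p - q) : ℝ))) τ := by
    apply HasDerivAt.fun_sum
    intro q hq
    exact (((hasDerivAt_pow (p - q) τ).mul_const ((-1:ℝ) ^ q)).mul_const
      ((Nat.factorial p : ℝ))).div_const _
  convert h1 using 1
  symm
  rw [Finset.sum_range_succ, Nat.sub_self]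
  simp only [Nat.cast_zero, zero_mul, zero_div, add_zero]
  conv_rhs => rw [Finset.sum_range_succ']
  have hf0 : τ ^ (p - 0) * (-1:ℝ) ^ 0 * (Nat.factorial p : ℝ) /
      (b ^ 0 * (Nat.factorial (p - 0) : ℝ)) = τ ^ p := by
    have : (Nat.factorial p : ℝ) ≠ 0 := Nat.cast_ne_zero.mpr (Nat.factorial_ne_zero p)
    field_simp
    rw [Nat.sub_zero]; ring
  rw [hf0, mul_add, mul_sum]
  rw [show b * τ ^ p - (∑ q ∈ Finset.range p,
      b * (τ ^ (p - (q+1)) * (-1:ℝ) ^ (q+1) * (Nat.factorial p : ℝ) /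
        (b ^ (q+1) * (Nat.factorial (p - (q+1)) : ℝ))) + b * τ ^ p)
    = ∑ q ∈ Finset.range p,
      -(b * (τ ^ (p - (q+1)) * (-1:ℝ) ^ (q+1) * (Nat.factorial p : ℝ) /
        (b ^ (q+1) * (Nat.factorial (p - (q+1)) : ℝ)))) by
      rw [Finset.sum_neg_distrib]; ring]
  apply Finset.sum_congr rfl
  intro q hq
  have hqp : q < p := Finset.mem_range.mp hq
  have he : p - q = (p - q - 1) + 1 := by omega
  have he2 : p - (q + 1) = p - q - 1 := by omega
  rw [he2, he, Nat.factorial_succ]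
  have hfac : ((p - q - 1).factorial : ℝ) ≠ 0 := Nat.cast_ne_zero.mpr (Nat.factorial_ne_zero _)
  have hbq : b ^ q ≠ 0 := pow_ne_zero _ hb
  push_cast
  field_simp
  ring

/-- Closed-form solution of the P-th order representative temporal ODE of the
diffusion operator: `du/dτ = d̄ (Σ_{p=0}^P a_p τ^p) − 2ā u + s`. -/
theorem stmt_0 (abar dbar s u₀ : ℝ) (habar : 0 < abar) (P : ℕ) (a : ℕ → ℝ)
    (u : ℝ → ℝ)
    (hu : u = fun τ =>
      (u₀ - s / (2 * abar) -
          (dbar / abar) * ∑ p ∈ Finset.range (P + 1),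
            (a p / 2) * (-1 : ℝ) ^ p * (Nat.factorial p : ℝ) / (2 * abar) ^ p) *
        Real.exp (-2 * abar * τ) +
      (dbar / abar) * ∑ p ∈ Finset.range (P + 1),
        (a p / 2) * ∑ q ∈ Finset.range (p + 1),
          τ ^ (p - q) * (-1 : ℝ) ^ q * (Nat.factorial p : ℝ) /
            ((2 * abar) ^ q * (Nat.factorial (p - q) : ℝ)) +
      s / (2 * abar)) :
    Differentiable ℝ u ∧ u 0 = u₀ ∧
      ∀ τ : ℝ, deriv u τ =
        dbar * (∑ p ∈ Finset.range (P + 1), a p * τ ^ p) - 2 * abar * u τ + s := by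
  subst hu
  have ha : abar ≠ 0 := ne_of_gt habar
  have hb : (2 : ℝ) * abar ≠ 0 := by positivity
  set C : ℝ := u₀ - s / (2 * abar) -
      (dbar / abar) * ∑ p ∈ Finset.range (P + 1),
        (a p / 2) * (-1 : ℝ) ^ p * (Nat.factorial p : ℝ) / (2 * abar) ^ p with hC
  set g : ℕ → ℝ → ℝ := fun p τ => ∑ q ∈ Finset.range (p + 1),
      τ ^ (p - q) * (-1 : ℝ) ^ q * (Nat.factorial p : ℝ) /
        ((2 * abar) ^ q * (Nat.factorial (p - q) : ℝ)) with hg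
  have hder : ∀ τ : ℝ, HasDerivAt
      (fun τ => C * Real.exp (-2 * abar * τ) +
        (dbar / abar) * ∑ p ∈ Finset.range (P + 1), (a p / 2) * g p τ +
        s / (2 * abar))
      (C * (Real.exp (-2 * abar * τ) * (-2 * abar)) +
        (dbar / abar) * ∑ p ∈ Finset.range (P + 1),
          (a p / 2) * (2 * abar * τ ^ p - 2 * abar * g p τ)) τ := by
    intro τ
    have h1 : HasDerivAt (fun t : ℝ => -2 * abar * t) (-2 * abar) τ := by
      simpa using (hasDerivAt_id τ).const_mul (-2 * abar)
    have h2 : HasDerivAt (fun t : ℝ => C * Real.exp (-2 * abar * t))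
        (C * (Real.exp (-2 * abar * τ) * (-2 * abar))) τ := h1.exp.const_mul C
    have h3 : HasDerivAt (fun t : ℝ =>
        (dbar / abar) * ∑ p ∈ Finset.range (P + 1), (a p / 2) * g p t)
        ((dbar / abar) * ∑ p ∈ Finset.range (P + 1),
          (a p / 2) * (2 * abar * τ ^ p - 2 * abar * g p τ)) τ := by
      refine HasDerivAt.const_mul _ (HasDerivAt.fun_sum fun p _ => ?_)
      exact (gderiv (2 * abar) hb p τ).const_mul (a p / 2)
    exact (h2.add h3).add_const _
  refine ⟨fun τ => (hder τ).differentiableAt, ?_, ?_⟩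
  · -- u 0 = u₀
    have hg0 : ∀ p : ℕ, g p 0 = (-1 : ℝ) ^ p * (Nat.factorial p : ℝ) / (2 * abar) ^ p := by
      intro p
      rw [hg]
      simp only
      rw [Finset.sum_range_succ, Nat.sub_self]
      rw [Finset.sum_eq_zero, zero_add]
      · simp [Nat.factorial]
      · intro q hq
        have : p - q ≠ 0 := by have := Finset.mem_range.mp hq; omega
        simp [zero_pow this]
    simp only [mul_zero, Real.exp_zero, mul_one]
    have : ∑ p ∈ Finset.range (P + 1), (a p / 2) * g p 0 =
        ∑ p ∈ Finset.range (P + 1),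
          (a p / 2) * (-1 : ℝ) ^ p * (Nat.factorial p : ℝ) / (2 * abar) ^ p := by
      refine Finset.sum_congr rfl fun p _ => ?_
      rw [hg0 p]; ring
    rw [this, hC]
    ring
  · intro τ
    rw [(hder τ).deriv]
    have hsplit : ∑ p ∈ Finset.range (P + 1),
        (a p / 2) * (2 * abar * τ ^ p - 2 * abar * g p τ) =
        abar * ∑ p ∈ Finset.range (P + 1), a p * τ ^ p -
        2 * abar * ∑ p ∈ Finset.range (P + 1), (a p / 2) * g p τ := by
      rw [Finset.mul_sum, Finset.mul_sum, ← Finset.sum_sub_distrib]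
      refine Finset.sum_congr rfl fun p _ => ?_
      ring
    rw [hsplit]
    field_simp
    ring
end

section
/- Let A > 0, B ∈ ℝ, x_i ∈ ℝ, Δx > 0, and α, β ∈ ℝ. Suppose u : ℝ → ℝ is twice differentiable with u''(x) − A·u(x) = B for all x, u(x_i − Δx) = α, and u(x_i + Δx) = β. Then u(x_i) = −B/A + (α + β + 2B/A)/(e^{√A·Δx} + e^{−√A·Δx}). -/
open Real

/-- Spatial-ODE (implicit) scheme for the 1D diffusion equation: the value at the
midpoint of a solution of `u'' − A u = B` with boundary values at `x_i ± Δx`. -/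
theorem stmt_2 (A B xi Δx α β : ℝ) (hA : 0 < A) (hΔx : 0 < Δx) (u : ℝ → ℝ)
    (hu : Differentiable ℝ u) (hu' : Differentiable ℝ (deriv u))
    (hODE : ∀ x : ℝ, deriv (deriv u) x - A * u x = B)
    (hbc₁ : u (xi - Δx) = α) (hbc₂ : u (xi + Δx) = β) :
    u xi = -B / A +
      (α + β + 2 * (B / A)) /
        (Real.exp (Real.sqrt A * Δx) + Real.exp (-(Real.sqrt A * Δx))) := by
  set s : ℝ := Real.sqrt A with hsdef
  have hs : 0 < s := Real.sqrt_pos.mpr hA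
  have hs2 : s * s = A := Real.mul_self_sqrt hA.le
  set c : ℝ := B / A with hcdef
  have hBc : A * c = B := by rw [hcdef]; field_simp [hA.ne']
  set g : ℝ → ℝ := fun x => (deriv u x + s * (u x + c)) * Real.exp (-(s * x)) with hgdef
  set h : ℝ → ℝ := fun x => (deriv u x - s * (u x + c)) * Real.exp (s * x) with hhdef
  have hexp : ∀ x : ℝ, HasDerivAt (fun y => Real.exp (s * y)) (Real.exp (s * x) * s) x := by
    intro x
    simpa using ((hasDerivAt_id x).const_mul s).exp
  have hexpn : ∀ x : ℝ, HasDerivAt (fun y => Real.exp (-(s * y))) (Real.exp (-(s * x)) * (-s)) x := by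
    intro x
    have h0 : HasDerivAt (fun y : ℝ => -s * y) (-s) x := by
      simpa using (hasDerivAt_id x).const_mul (-s)
    have h1 : HasDerivAt (fun y : ℝ => -(s * y)) (-s) x := by
      simpa [neg_mul] using h0
    exact h1.exp
  have hgd : ∀ x, HasDerivAt g 0 x := by
    intro x
    have h1 : HasDerivAt (fun y => deriv u y + s * (u y + c))
        (deriv (deriv u) x + s * deriv u x) x :=
      ((hu' x).hasDerivAt).add ((((hu x).hasDerivAt).add_const c).const_mul s)
    have h3 : HasDerivAt (fun y => (deriv u y + s * (u y + c)) * Real.exp (-(s * y)))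
      ((deriv (deriv u) x + s * deriv u x) * Real.exp (-(s * x)) + (deriv u x + s * (u x + c)) * (Real.exp (-(s * x)) * (-s))) x := h1.mul (hexpn x)
    convert h3 using 1
    have hu2 : deriv (deriv u) x = A * u x + B := by linarith [hODE x]
    rw [hu2]
    linear_combination (Real.exp (-(s * x)) * (u x + c)) * hs2 + Real.exp (-(s * x)) * hBc
  have hhd : ∀ x, HasDerivAt h 0 x := by
    intro x
    have h1 : HasDerivAt (fun y => deriv u y - s * (u y + c))
        (deriv (deriv u) x - s * deriv u x) x :=
      ((hu' x).hasDerivAt).sub ((((hu x).hasDerivAt).add_const c).const_mul s)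
    have h3 : HasDerivAt (fun y => (deriv u y - s * (u y + c)) * Real.exp (s * y))
      ((deriv (deriv u) x - s * deriv u x) * Real.exp (s * x) + (deriv u x - s * (u x + c)) * (Real.exp (s * x) * s)) x := h1.mul (hexp x)
    convert h3 using 1
    have hu2 : deriv (deriv u) x = A * u x + B := by linarith [hODE x]
    rw [hu2]
    linear_combination (Real.exp (s * x) * (u x + c)) * hs2 + Real.exp (s * x) * hBc
  have hgconst : ∀ x, g x = g 0 :=
    fun x => is_const_of_deriv_eq_zero (fun y => (hgd y).differentiableAt)
      (fun y => (hgd y).deriv) x 0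
  have hhconst : ∀ x, h x = h 0 :=
    fun x => is_const_of_deriv_eq_zero (fun y => (hhd y).differentiableAt)
      (fun y => (hhd y).deriv) x 0
  set G : ℝ := g 0 with hG
  set H : ℝ := h 0 with hH
  have key : ∀ x, 2 * s * (u x + c) = G * Real.exp (s * x) - H * Real.exp (-(s * x)) := by
    intro x
    have hg := hgconst x
    have hh := hhconst x
    have hmul : Real.exp (-(s * x)) * Real.exp (s * x) = 1 := by
      rw [← Real.exp_add]; simp
    simp only [hgdef, hhdef, mul_zero, neg_zero, Real.exp_zero, mul_one] at hg hh
    linear_combination Real.exp (s * x) * hg - Real.exp (-(s * x)) * hh -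
      2 * s * (u x + c) * hmul
  have e1 : Real.exp (s * (xi - Δx)) = Real.exp (s * xi) * Real.exp (-(s * Δx)) := by
    rw [← Real.exp_add]; ring_nf
  have e2 : Real.exp (-(s * (xi - Δx))) = Real.exp (-(s * xi)) * Real.exp (s * Δx) := by
    rw [← Real.exp_add]; ring_nf
  have e3 : Real.exp (s * (xi + Δx)) = Real.exp (s * xi) * Real.exp (s * Δx) := by
    rw [← Real.exp_add]; ring_nf
  have e4 : Real.exp (-(s * (xi + Δx))) = Real.exp (-(s * xi)) * Real.exp (-(s * Δx)) := by
    rw [← Real.exp_add]; ring_nf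
  have k1 := key (xi - Δx)
  have k2 := key (xi + Δx)
  have k0 := key xi
  rw [e1, e2, hbc₁] at k1
  rw [e3, e4, hbc₂] at k2
  set Ep : ℝ := Real.exp (s * Δx) with hEp
  set Em : ℝ := Real.exp (-(s * Δx)) with hEm
  have hD : 0 < Ep + Em := by positivity
  have hsum : 2 * s * ((u xi + c) * (Ep + Em)) = 2 * s * (α + β + 2 * c) := by
    linear_combination (Ep + Em) * k0 - k1 - k2
  have h2 : (u xi + c) * (Ep + Em) = α + β + 2 * c :=
    mul_left_cancel₀ (by positivity : (2 : ℝ) * s ≠ 0) hsum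
  have h2' : (u xi * A + B) * (Ep + Em) = A * α + A * β + 2 * B := by
    have := h2
    rw [show u xi * A + B = A * (u xi + c) by rw [← hBc]; ring]
    linear_combination A * this + 2 * hBc
  rw [hcdef] at *
  field_simp
  linear_combination h2'
end

section
/- Let A > 0, B, C ∈ ℝ, x_i ∈ ℝ, Δx > 0, and α, β ∈ ℝ, and set λ₁ = (C + √(C² + 4A))/2 and λ₂ = (C − √(C² + 4A))/2. Suppose u : ℝ → ℝ is twice differentiable with u''(x) − C·u'(x) − A·u(x) = B for all x, u(x_i − Δx) = α, and u(x_i + Δx) = β. Then u(x_i) = k₁α + k₂β + k₃, where k₁ = (e^{λ₂Δx} − e^{λ₁Δx})/(e^{(λ₂−λ₁)Δx} − e^{(λ₁−λ₂)Δx}), k₂ = (e^{−λ₁Δx} − e^{−λ₂Δx})/(e^{(λ₂−λ₁)Δx} − e^{(λ₁−λ₂)Δx}), and k₃ = −B/A + (B/A)·(e^{λ₂Δx} − e^{λ₁Δx} + e^{−λ₁Δx} − e^{−λ₂Δx})/(e^{(λ₂−λ₁)Δx} − e^{(λ₁−λ₂)Δx}). -/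
set_option maxHeartbeats 1000000


open Real

private lemma first_order_ode (f : ℝ → ℝ) (hf : Differentiable ℝ f) (a : ℝ)
    (h : ∀ x, deriv f x = a * f x) : ∀ x, f x = f 0 * Real.exp (a * x) := by
  have hg : ∀ x, HasDerivAt (fun x => f x * Real.exp (-(a * x))) 0 x := by
    intro x
    have h1 : HasDerivAt f (a * f x) x := h x ▸ (hf x).hasDerivAt
    have h2 : HasDerivAt (fun x => Real.exp (-(a * x)))
        (Real.exp (-(a * x)) * (-a)) x := by
      have := ((hasDerivAt_id x).const_mul a).neg.exp
      simpa using this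
    have := h1.mul h2
    refine this.congr_deriv (Eq.symm ?_)
    ring
  have hc : ∀ x y, (fun x => f x * Real.exp (-(a * x))) x
      = (fun x => f x * Real.exp (-(a * x))) y :=
    is_const_of_deriv_eq_zero (fun x => (hg x).differentiableAt)
      (fun x => (hg x).deriv)
  intro x
  have := hc x 0
  simp only at this
  field_simp at this
  calc f x = f x * Real.exp (-(a*x)) * Real.exp (a*x) := by
        rw [mul_assoc, ← Real.exp_add]; simp
    _ = f 0 * Real.exp (a * x) := by rw [this]; simp

/-- Spatial-ODE scheme for the 1D linear advection–diffusion equation without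
splitting: midpoint value of a solution of `u'' − C u' − A u = B` with boundary
values at `x_i ± Δx`. -/
theorem stmt_3 (A B C xi Δx α β : ℝ) (hA : 0 < A) (hΔx : 0 < Δx)
    (lam₁ lam₂ : ℝ)
    (hlam₁ : lam₁ = (C + Real.sqrt (C ^ 2 + 4 * A)) / 2)
    (hlam₂ : lam₂ = (C - Real.sqrt (C ^ 2 + 4 * A)) / 2)
    (u : ℝ → ℝ)
    (hu : Differentiable ℝ u) (hu' : Differentiable ℝ (deriv u))
    (hODE : ∀ x : ℝ, deriv (deriv u) x - C * deriv u x - A * u x = B)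
    (hbc₁ : u (xi - Δx) = α) (hbc₂ : u (xi + Δx) = β) :
    u xi =
      ((Real.exp (lam₂ * Δx) - Real.exp (lam₁ * Δx)) /
          (Real.exp ((lam₂ - lam₁) * Δx) - Real.exp ((lam₁ - lam₂) * Δx))) * α +
      ((Real.exp (-(lam₁ * Δx)) - Real.exp (-(lam₂ * Δx))) /
          (Real.exp ((lam₂ - lam₁) * Δx) - Real.exp ((lam₁ - lam₂) * Δx))) * β +
      (-(B / A) +
        (B / A) *
          (Real.exp (lam₂ * Δx) - Real.exp (lam₁ * Δx) +
              Real.exp (-(lam₁ * Δx)) - Real.exp (-(lam₂ * Δx))) /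
            (Real.exp ((lam₂ - lam₁) * Δx) - Real.exp ((lam₁ - lam₂) * Δx))) := by
  have hA' : A ≠ 0 := ne_of_gt hA
  -- basic facts about the roots
  have hdisc : (0:ℝ) < C ^ 2 + 4 * A := by nlinarith [sq_nonneg C]
  have hs : Real.sqrt (C ^ 2 + 4 * A) ^ 2 = C ^ 2 + 4 * A :=
    Real.sq_sqrt hdisc.le
  have hspos : 0 < Real.sqrt (C ^ 2 + 4 * A) := Real.sqrt_pos.mpr hdisc
  have hsum : lam₁ + lam₂ = C := by rw [hlam₁, hlam₂]; ring
  have hprod : lam₁ * lam₂ = -A := by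
    rw [hlam₁, hlam₂]; nlinarith [hs]
  have hdiff : lam₁ - lam₂ = Real.sqrt (C ^ 2 + 4 * A) := by
    rw [hlam₁, hlam₂]; ring
  have hne : lam₁ ≠ lam₂ := by
    intro h; rw [h] at hdiff; simp at hdiff; linarith [hdiff ▸ hspos]
  -- the function v = u + B/A solves the homogeneous equation
  set v : ℝ → ℝ := fun x => u x + B / A with hv
  have hvdiff : Differentiable ℝ v := hu.add_const _
  have hvderiv : ∀ x, HasDerivAt v (deriv u x) x :=
    fun x => (hu x).hasDerivAt.add_const _
  -- w = u' - lam₂ v satisfies w' = lam₁ w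
  set w : ℝ → ℝ := fun x => deriv u x - lam₂ * v x with hw
  have hwderiv : ∀ x, HasDerivAt w (deriv (deriv u) x - lam₂ * deriv u x) x :=
    fun x => (hu' x).hasDerivAt.sub ((hvderiv x).const_mul lam₂)
  have hwdiff : Differentiable ℝ w := fun x => (hwderiv x).differentiableAt
  have hwode : ∀ x, deriv w x = lam₁ * w x := by
    intro x
    rw [(hwderiv x).deriv]
    have h1 := hODE x
    have hBA : lam₁ * lam₂ * (B / A) = -B := by rw [hprod]; field_simp
    show deriv (deriv u) x - lam₂ * deriv u x = lam₁ * (deriv u x - lam₂ * (u x + B / A))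
    linear_combination h1 - deriv u x * hsum + u x * hprod + hBA
  have hwrep := first_order_ode w hwdiff lam₁ hwode
  set K := w 0 with hK
  -- g = v * exp(-lam₂ x) has derivative K exp((lam₁-lam₂)x)
  set c₁ := K / (lam₁ - lam₂) with hc₁
  have hgder : ∀ x, HasDerivAt
      (fun x => v x * Real.exp (-(lam₂ * x)) - c₁ * Real.exp ((lam₁ - lam₂) * x)) 0 x := by
    intro x
    have h2 : HasDerivAt (fun x => Real.exp (-(lam₂ * x)))
        (Real.exp (-(lam₂ * x)) * (-lam₂)) x := by
      have := ((hasDerivAt_id x).const_mul lam₂).neg.exp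
      simpa using this
    have h3 : HasDerivAt (fun x => c₁ * Real.exp ((lam₁ - lam₂) * x))
        (c₁ * (Real.exp ((lam₁ - lam₂) * x) * (lam₁ - lam₂))) x := by
      have := (((hasDerivAt_id x).const_mul (lam₁ - lam₂)).exp).const_mul c₁
      simpa [mul_comm, mul_assoc, mul_left_comm] using this
    have := ((hvderiv x).mul h2).sub h3
    refine this.congr_deriv (Eq.symm ?_)
    have hwx : deriv u x - lam₂ * v x = K * Real.exp (lam₁ * x) := hwrep x
    have hsub : lam₁ - lam₂ ≠ 0 := sub_ne_zero.mpr hne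
    have hc₁' : c₁ * (lam₁ - lam₂) = K := by rw [hc₁]; exact div_mul_cancel₀ K hsub
    have hexp : Real.exp ((lam₁ - lam₂) * x) = Real.exp (lam₁ * x) * Real.exp (-(lam₂ * x)) := by
      rw [← Real.exp_add]; ring_nf
    rw [hexp]
    linear_combination (-(Real.exp (-(lam₂ * x)))) * hwx +
      (Real.exp (lam₁ * x) * Real.exp (-(lam₂ * x))) * hc₁'
  have hgc : ∀ x y, (fun x => v x * Real.exp (-(lam₂ * x)) - c₁ * Real.exp ((lam₁ - lam₂) * x)) x
      = (fun x => v x * Real.exp (-(lam₂ * x)) - c₁ * Real.exp ((lam₁ - lam₂) * x)) y :=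
    is_const_of_deriv_eq_zero (fun x => (hgder x).differentiableAt)
      (fun x => (hgder x).deriv)
  set c₂ := v 0 - c₁ with hc₂
  have hrepr : ∀ x, u x = c₁ * Real.exp (lam₁ * x) + c₂ * Real.exp (lam₂ * x) - B / A := by
    intro x
    have h0 := hgc x 0
    simp only [mul_zero, neg_zero, Real.exp_zero, mul_one] at h0
    -- h0 : v x * exp(-(lam₂ x)) - c₁ * exp((lam₁-lam₂)x) = v 0 - c₁
    have hvx : v x = u x + B / A := rfl
    have hexp1 : Real.exp ((lam₁ - lam₂) * x) = Real.exp (lam₁ * x) * Real.exp (-(lam₂ * x)) := by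
      rw [← Real.exp_add]; ring_nf
    rw [hexp1] at h0
    have hne2 : Real.exp (-(lam₂ * x)) ≠ 0 := Real.exp_ne_zero _
    have h1 : v x - c₁ * Real.exp (lam₁ * x) = (v 0 - c₁) * Real.exp (lam₂ * x) := by
      have : Real.exp (-(lam₂ * x)) * Real.exp (lam₂ * x) = 1 := by
        rw [← Real.exp_add]; simp
      calc v x - c₁ * Real.exp (lam₁ * x)
          = (v x * Real.exp (-(lam₂ * x)) - c₁ * (Real.exp (lam₁ * x) * Real.exp (-(lam₂ * x)))) * Real.exp (lam₂ * x) := by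
            linear_combination (c₁ * Real.exp (lam₁ * x) - v x) * this
        _ = (v 0 - c₁) * Real.exp (lam₂ * x) := by rw [h0]
    have h2 : u x + B / A - c₁ * Real.exp (lam₁ * x) = c₂ * Real.exp (lam₂ * x) := h1
    linarith [h2]
  -- make the coefficients opaque and generalize B/A
  obtain ⟨d₁, d₂, hrep⟩ : ∃ d₁ d₂ : ℝ, ∀ x, u x =
      d₁ * Real.exp (lam₁ * x) + d₂ * Real.exp (lam₂ * x) - B / A := ⟨c₁, c₂, hrepr⟩
  obtain ⟨r, hr⟩ : ∃ r : ℝ, B / A = r := ⟨_, rfl⟩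
  rw [hr] at hrep
  -- now pure algebra
  set a := Real.exp (lam₁ * Δx) with ha
  set b := Real.exp (lam₂ * Δx) with hb
  set p := Real.exp (lam₁ * xi) with hp
  set q := Real.exp (lam₂ * xi) with hq
  have ha0 : a ≠ 0 := Real.exp_ne_zero _
  have hb0 : b ≠ 0 := Real.exp_ne_zero _
  have e1 : Real.exp (lam₁ * (xi - Δx)) = p / a := by
    rw [ha, hp, ← Real.exp_sub]; ring_nf
  have e2 : Real.exp (lam₂ * (xi - Δx)) = q / b := by
    rw [hb, hq, ← Real.exp_sub]; ring_nf
  have e3 : Real.exp (lam₁ * (xi + Δx)) = p * a := by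
    rw [ha, hp, ← Real.exp_add]; ring_nf
  have e4 : Real.exp (lam₂ * (xi + Δx)) = q * b := by
    rw [hb, hq, ← Real.exp_add]; ring_nf
  have e5 : Real.exp ((lam₂ - lam₁) * Δx) = b / a := by
    rw [ha, hb, ← Real.exp_sub]; ring_nf
  have e6 : Real.exp ((lam₁ - lam₂) * Δx) = a / b := by
    rw [ha, hb, ← Real.exp_sub]; ring_nf
  have e7 : Real.exp (-(lam₁ * Δx)) = 1 / a := by
    rw [ha, Real.exp_neg]; simp
  have e8 : Real.exp (-(lam₂ * Δx)) = 1 / b := by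
    rw [hb, Real.exp_neg]; simp
  -- denominator is nonzero
  have hab : b / a < a / b := by
    rw [← e5, ← e6]
    apply Real.exp_lt_exp.mpr
    have : 0 < lam₁ - lam₂ := hdiff ▸ hspos
    nlinarith
  have hden : b / a - a / b ≠ 0 := by linarith
  have hα : d₁ * (p / a) + d₂ * (q / b) - r = α := by
    rw [← e1, ← e2, ← hrep (xi - Δx)]; exact hbc₁
  have hβ : d₁ * (p * a) + d₂ * (q * b) - r = β := by
    rw [← e3, ← e4, ← hrep (xi + Δx)]; exact hbc₂
  have hden2 : b * b - a * a ≠ 0 := by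
    intro h
    apply hden
    field_simp
    linear_combination h
  have hDrw : b / a - a / b = (b * b - a * a) / (a * b) := by
    field_simp
    try ring
  rw [hrep xi, ← hp, ← hq, e5, e6, e7, e8, hr, ← hα, ← hβ, hDrw]
  have hden3 : b ^ 2 - a ^ 2 ≠ 0 := by rw [sq, sq]; exact hden2
  field_simp
  ring
end

section
/- Let ā > 0, d̄ ∈ ℝ, u₀ ∈ ℝ, and 𝒰ⁿ, 𝒰^{n+1} ∈ ℝ. For Δt > 0 set a₀ = 𝒰ⁿ and a₁ = (𝒰^{n+1} − 𝒰ⁿ)/Δt, and define u(Δt) = e^{−2ā·Δt}·(u₀ − (d̄/ā)·(a₀/2 − a₁/(4ā))) + (d̄/ā)·(a₀/2 + (a₁/2)·(Δt − 1/(2ā))). Then u(Δt) tends to (d̄/ā)·𝒰^{n+1}/2 as Δt → ∞. -/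
open Real Filter

/-- P = 1 case: the first-order temporal-ODE update for the diffusion operator
(zero source) tends to the fully-implicit update `(d̄/ā)·𝒰^{n+1}/2` as `Δt → ∞`. -/
theorem stmt_6 (abar dbar u₀ Un Un1 : ℝ) (habar : 0 < abar) :
    Tendsto
      (fun Δt : ℝ =>
        Real.exp (-2 * abar * Δt) *
            (u₀ - (dbar / abar) * (Un / 2 - ((Un1 - Un) / Δt) / (4 * abar))) +
          (dbar / abar) *
            (Un / 2 + (((Un1 - Un) / Δt) / 2) * (Δt - 1 / (2 * abar))))
      atTop (nhds ((dbar / abar) * Un1 / 2)) := by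
  have hg : Tendsto (fun Δt : ℝ => (Un1 - Un) / Δt) atTop (nhds 0) :=
    tendsto_const_nhds.div_atTop tendsto_id
  have hexp : Tendsto (fun Δt : ℝ => Real.exp (-2 * abar * Δt)) atTop (nhds 0) := by
    apply Real.tendsto_exp_atBot.comp
    have : Tendsto (fun Δt : ℝ => (2 * abar) * Δt) atTop atTop :=
      Tendsto.const_mul_atTop (by linarith) tendsto_id
    have h := tendsto_neg_atBot_iff.mpr this
    refine h.congr fun x => by ring
  have hmain : Tendsto
      (fun Δt : ℝ =>
        Real.exp (-2 * abar * Δt) *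
            (u₀ - (dbar / abar) * (Un / 2 - ((Un1 - Un) / Δt) / (4 * abar))) +
          (dbar / abar) *
            (Un / 2 + (Un1 - Un) / 2 - ((Un1 - Un) / Δt) / (4 * abar)))
      atTop (nhds (0 * (u₀ - (dbar / abar) * (Un / 2 - 0 / (4 * abar))) +
          (dbar / abar) * (Un / 2 + (Un1 - Un) / 2 - 0 / (4 * abar)))) := by
    exact (hexp.mul (tendsto_const_nhds.sub (tendsto_const_nhds.mul
      (tendsto_const_nhds.sub (hg.div_const _))))).add
      (tendsto_const_nhds.mul (tendsto_const_nhds.sub (hg.div_const _)))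
  have hval : 0 * (u₀ - (dbar / abar) * (Un / 2 - 0 / (4 * abar))) +
      (dbar / abar) * (Un / 2 + (Un1 - Un) / 2 - 0 / (4 * abar)) =
      (dbar / abar) * Un1 / 2 := by ring
  rw [hval] at hmain
  refine hmain.congr' ?_
  filter_upwards [eventually_gt_atTop (0 : ℝ)] with Δt hΔt
  have hΔt' : Δt ≠ 0 := ne_of_gt hΔt
  have habar' : abar ≠ 0 := ne_of_gt habar
  field_simp
  ring
end

section
/- Let ā > 0, d̄ ∈ ℝ, u₀ ∈ ℝ, and 𝒰ⁿ, 𝒰^{n+1/2}, 𝒰^{n+1} ∈ ℝ. For Δt > 0 set a₀ = 𝒰ⁿ, a₁ = (−3𝒰ⁿ + 4𝒰^{n+1/2} − 𝒰^{n+1})/Δt, and a₂ = (2𝒰ⁿ − 4𝒰^{n+1/2} + 2𝒰^{n+1})/(Δt)², and define u(Δt) = e^{−2ā·Δt}·(u₀ − (d̄/ā)·(a₀/2 − a₁/(4ā) + a₂/(4ā²))) + (d̄/ā)·(a₀/2 + (a₁/2)·(Δt − 1/(2ā)) + (a₂/2)·(1/(2ā²) − Δt/ā + (Δt)²)). Then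 u(Δt) tends to (d̄/ā)·𝒰^{n+1}/2 as Δt → ∞. -/
open Real Filter

/-- P = 2 case: the second-order temporal-ODE update for the diffusion operator
(zero source) tends to the fully-implicit update `(d̄/ā)·𝒰^{n+1}/2` as `Δt → ∞`. -/
theorem stmt_7 (abar dbar u₀ Un Unh Un1 : ℝ) (habar : 0 < abar) :
    Tendsto
      (fun Δt : ℝ =>
        Real.exp (-2 * abar * Δt) *
            (u₀ - (dbar / abar) *
              (Un / 2 - ((-3 * Un + 4 * Unh - Un1) / Δt) / (4 * abar) +
                ((2 * Un - 4 * Unh + 2 * Un1) / Δt ^ 2) / (4 * abar ^ 2))) +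
          (dbar / abar) *
            (Un / 2 +
              (((-3 * Un + 4 * Unh - Un1) / Δt) / 2) * (Δt - 1 / (2 * abar)) +
              (((2 * Un - 4 * Unh + 2 * Un1) / Δt ^ 2) / 2) *
                (1 / (2 * abar ^ 2) - Δt / abar + Δt ^ 2)))
      atTop (nhds ((dbar / abar) * Un1 / 2)) := by
  have hA : (abar : ℝ) ≠ 0 := ne_of_gt habar
  set c := dbar / abar with hc
  set A := -3 * Un + 4 * Unh - Un1 with hAdef
  set B := 2 * Un - 4 * Unh + 2 * Un1 with hBdef
  have hinv : Tendsto (fun t : ℝ => t⁻¹) atTop (nhds 0) := tendsto_inv_atTop_zero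
  have hexp : Tendsto (fun t : ℝ => Real.exp (-2 * abar * t)) atTop (nhds 0) := by
    apply Real.tendsto_exp_atBot.comp
    have h2 : Tendsto (fun t : ℝ => (-2 * abar) * t) atTop atBot := by
      apply Tendsto.const_mul_atTop_of_neg (by linarith) tendsto_id
    exact h2
  -- the nice form
  have key : Tendsto
      (fun t : ℝ =>
        Real.exp (-2 * abar * t) *
          (u₀ - c * (Un / 2 - t⁻¹ * (A / (4 * abar)) + t⁻¹ * t⁻¹ * (B / (4 * abar ^ 2)))) +
        (c * Un1 / 2 +
          c * (t⁻¹ * (-(A / (4 * abar)) - B / (2 * abar)) + t⁻¹ * t⁻¹ * (B / (4 * abar ^ 2)))))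
      atTop (nhds (c * Un1 / 2)) := by
    have hbr : Tendsto
        (fun t : ℝ => u₀ - c * (Un / 2 - t⁻¹ * (A / (4 * abar)) + t⁻¹ * t⁻¹ * (B / (4 * abar ^ 2))))
        atTop (nhds (u₀ - c * (Un / 2 - 0 * (A / (4 * abar)) + 0 * 0 * (B / (4 * abar ^ 2))))) := by
      exact tendsto_const_nhds.sub (((tendsto_const_nhds.sub (hinv.mul_const _)).add
        ((hinv.mul hinv).mul_const _)).const_mul _)
    have h1 := hexp.mul hbr
    have h2 : Tendsto
        (fun t : ℝ => c * Un1 / 2 +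
          c * (t⁻¹ * (-(A / (4 * abar)) - B / (2 * abar)) + t⁻¹ * t⁻¹ * (B / (4 * abar ^ 2))))
        atTop (nhds (c * Un1 / 2 + c * (0 * (-(A / (4 * abar)) - B / (2 * abar)) + 0 * 0 * (B / (4 * abar ^ 2))))) := by
      exact tendsto_const_nhds.add (((hinv.mul_const _).add ((hinv.mul hinv).mul_const _)).const_mul _)
    have := h1.add h2
    simpa using this
  apply key.congr'
  filter_upwards [eventually_gt_atTop 0] with t ht
  have ht0 : t ≠ 0 := ne_of_gt ht
  field_simp
  ring
end

section
/- Let P ≥ 1 be a natural number, ā > 0, d̄ ∈ ℝ, u₀ ∈ ℝ, and U = (U₀, …, U_P) ∈ ℝ^{P+1} a fixed vector. For Δt > 0, let T_K = K·Δt/P for K = 0, …, P, let M(Δt) be the (P+1)×(P+1) matrix with entries M(Δt)_{K,p} = (T_K)^p, and let a(Δt) = (a₀, …, a_P) be the unique solution of M(Δt)·a = U. Define u(Δt) = (u₀ − (d̄/ā)·Σ_{p=0}^{P} (a_p/2)·(−1)^p p!/(2ā)^p)·e^{−2ā·Δt} + (d̄/ā)·Σ_{p=0}^{P} (a_p/2)·Σ_{q=0}^{p}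 (Δt)^{p−q}·(−1)^q p!/((2ā)^q (p−q)!). Then M(Δt) is invertible and u(Δt) tends to (d̄/ā)·U_P/2 as Δt → ∞. -/
open Real Filter Finset

/-- Auxiliary limit function for `stmt_8`. -/
noncomputable def stmtF8 (P : ℕ) (abar u₀ dbar : ℝ) (c : Fin (P + 1) → ℝ) (x y : ℝ) : ℝ :=
  (u₀ - (dbar / abar) * ∑ p : Fin (P + 1),
      (c p * x ^ (p : ℕ) / 2) * (-1 : ℝ) ^ (p : ℕ) * (Nat.factorial (p : ℕ) : ℝ) /
        (2 * abar) ^ (p : ℕ)) * y +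
  (dbar / abar) * ∑ p : Fin (P + 1),
    (c p / 2) * ∑ q ∈ Finset.range ((p : ℕ) + 1),
      x ^ q * (-1 : ℝ) ^ q * (Nat.factorial (p : ℕ) : ℝ) /
        ((2 * abar) ^ q * (Nat.factorial ((p : ℕ) - q) : ℝ))

set_option maxHeartbeats 1000000 in
/-- General proposition: the P-th order multi-stage temporal-ODE update formula
for the diffusion operator with zero source, built from the interpolation
coefficients `a(Δt)` solving the Vandermonde system `M(Δt)·a = U` at equidistant
nodes `T_K = K·Δt/P`, converges to the fully-implicit update `(d̄/ā)·U_P/2`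
as `Δt → ∞`; moreover `M(Δt)` is invertible. -/
theorem stmt_8 (P : ℕ) (hP : 1 ≤ P) (abar dbar u₀ : ℝ) (habar : 0 < abar)
    (U : Fin (P + 1) → ℝ)
    (M : ℝ → Matrix (Fin (P + 1)) (Fin (P + 1)) ℝ)
    (hM : M = fun Δt => Matrix.of fun K p : Fin (P + 1) =>
      ((K : ℕ) * Δt / (P : ℝ)) ^ (p : ℕ))
    (a : ℝ → Fin (P + 1) → ℝ)
    (ha : ∀ Δt : ℝ, 0 < Δt → (M Δt).mulVec (a Δt) = U)
    (u : ℝ → ℝ)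
    (hu : u = fun Δt =>
      (u₀ - (dbar / abar) * ∑ p : Fin (P + 1),
          (a Δt p / 2) * (-1 : ℝ) ^ (p : ℕ) * (Nat.factorial (p : ℕ) : ℝ) /
            (2 * abar) ^ (p : ℕ)) *
        Real.exp (-2 * abar * Δt) +
      (dbar / abar) * ∑ p : Fin (P + 1),
        (a Δt p / 2) * ∑ q ∈ Finset.range ((p : ℕ) + 1),
          Δt ^ ((p : ℕ) - q) * (-1 : ℝ) ^ q * (Nat.factorial (p : ℕ) : ℝ) /
            ((2 * abar) ^ q * (Nat.factorial ((p : ℕ) - q) : ℝ))) :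
    (∀ Δt : ℝ, 0 < Δt → IsUnit (M Δt).det) ∧
      Tendsto u atTop (nhds ((dbar / abar) * U (Fin.last P) / 2)) := by
  have hPR : ((P : ℝ)) ≠ 0 := by
    exact_mod_cast Nat.one_le_iff_ne_zero.mp hP
  -- determinant is a unit for Δt > 0
  have hdet : ∀ Δt : ℝ, 0 < Δt → IsUnit (M Δt).det := by
    intro Δt hΔt
    simp only [hM]
    rw [isUnit_iff_ne_zero,
      show (Matrix.of fun K p : Fin (P + 1) => ((K : ℕ) * Δt / (P : ℝ)) ^ (p : ℕ))
        = Matrix.vandermonde (fun K : Fin (P + 1) => ((K : ℕ) : ℝ) * Δt / (P : ℝ)) from rfl,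
      Matrix.det_vandermonde_ne_zero_iff]
    intro i j hij
    have h1 : ((i : ℕ) : ℝ) = ((j : ℕ) : ℝ) := by
      have h2 := congrArg (· * (P : ℝ)) hij
      simp only [div_mul_cancel₀ _ hPR] at h2
      exact mul_right_cancel₀ hΔt.ne' h2
    have : (i : ℕ) = (j : ℕ) := by exact_mod_cast h1
    exact Fin.ext this
  refine ⟨hdet, ?_⟩
  set c : Fin (P + 1) → ℝ := a 1 with hcdef
  -- scaling of interpolation coefficients
  have hc : ∀ Δt : ℝ, 0 < Δt → a Δt = fun p : Fin (P + 1) => c p * (Δt⁻¹) ^ (p : ℕ) := by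
    intro Δt hΔt
    have : Invertible (M Δt) := (M Δt).invertibleOfIsUnitDet (hdet Δt hΔt)
    apply (M Δt).mulVec_injective_of_invertible
    rw [ha Δt hΔt, ← ha 1 one_pos]
    funext K
    simp only [hM, Matrix.mulVec, dotProduct, Matrix.of_apply]
    refine Finset.sum_congr rfl fun p _ => Eq.symm ?_
    have hx : ((K : ℕ) : ℝ) * Δt / (P : ℝ) * Δt⁻¹ = ((K : ℕ) : ℝ) * 1 / (P : ℝ) := by
      field_simp
    have hpow : (((K : ℕ) : ℝ) * Δt / (P : ℝ)) ^ (p : ℕ) * (Δt⁻¹) ^ (p : ℕ)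
        = (((K : ℕ) : ℝ) * 1 / (P : ℝ)) ^ (p : ℕ) := by
      rw [← mul_pow, hx]
    calc (((K : ℕ) : ℝ) * Δt / (P : ℝ)) ^ (p : ℕ) * (c p * (Δt⁻¹) ^ (p : ℕ))
        = ((((K : ℕ) : ℝ) * Δt / (P : ℝ)) ^ (p : ℕ) * (Δt⁻¹) ^ (p : ℕ)) * c p := by ring
      _ = (((K : ℕ) : ℝ) * 1 / (P : ℝ)) ^ (p : ℕ) * a 1 p := by rw [hpow]
  -- sum of c equals U at last node
  have hU : ∑ p : Fin (P + 1), c p = U (Fin.last P) := by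
    have h := congrFun (ha 1 one_pos) (Fin.last P)
    simp only [hM, Matrix.mulVec, dotProduct, Matrix.of_apply] at h
    rw [← h]
    refine Finset.sum_congr rfl fun p _ => ?_
    have hx : ((Fin.last P : ℕ) : ℝ) * 1 / (P : ℝ) = 1 := by
      rw [Fin.val_last]
      field_simp
    rw [hx, one_pow, one_mul]
  -- the limit function
  have hF : Continuous (fun z : ℝ × ℝ => stmtF8 P abar u₀ dbar c z.1 z.2) := by
    unfold stmtF8
    apply Continuous.add
    · apply Continuous.mul _ continuous_snd
      apply Continuous.sub continuous_const
      apply Continuous.mul continuous_const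
      apply continuous_finset_sum
      intro p _
      fun_prop
    · apply Continuous.mul continuous_const
      apply continuous_finset_sum
      intro p _
      apply Continuous.mul continuous_const
      apply continuous_finset_sum
      intro q _
      fun_prop
  have hexp : Tendsto (fun Δt : ℝ => Real.exp (-2 * abar * Δt)) atTop (nhds 0) := by
    apply Real.tendsto_exp_atBot.comp
    exact Tendsto.const_mul_atTop_of_neg (by linarith) tendsto_id
  have hto : Tendsto (fun Δt : ℝ => ((Δt⁻¹ : ℝ), Real.exp (-2 * abar * Δt)))
      atTop (nhds ((0 : ℝ), (0 : ℝ))) :=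
    tendsto_inv_atTop_zero.prodMk_nhds hexp
  have hmain0 := (hF.tendsto (0, 0)).comp hto
  have hmain : Tendsto (fun Δt : ℝ => stmtF8 P abar u₀ dbar c Δt⁻¹
      (Real.exp (-2 * abar * Δt))) atTop (nhds (stmtF8 P abar u₀ dbar c 0 0)) :=
    hmain0.congr fun Δt => rfl
  have hF00 : stmtF8 P abar u₀ dbar c 0 0 = (dbar / abar) * U (Fin.last P) / 2 := by
    have hsum : ∀ p : Fin (P + 1),
        ∑ q ∈ Finset.range ((p : ℕ) + 1),
          (0 : ℝ) ^ q * (-1 : ℝ) ^ q * (Nat.factorial (p : ℕ) : ℝ) /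
            ((2 * abar) ^ q * (Nat.factorial ((p : ℕ) - q) : ℝ)) = 1 := by
      intro p
      rw [Finset.sum_eq_single 0]
      · simp [Nat.factorial_ne_zero]
      · intro q _ hq0
        simp [zero_pow hq0]
      · simp
    unfold stmtF8
    simp only [mul_zero, zero_add, hsum, mul_one]
    rw [← hU, mul_div_assoc, ← Finset.sum_div]
  rw [← hF00]
  refine Tendsto.congr' ?_ hmain
  filter_upwards [eventually_gt_atTop (0 : ℝ)] with Δt hΔt
  have hterm : ∀ p : Fin (P + 1),
      (c p / 2) * ∑ q ∈ Finset.range ((p : ℕ) + 1),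
        (Δt⁻¹) ^ q * (-1 : ℝ) ^ q * (Nat.factorial (p : ℕ) : ℝ) /
          ((2 * abar) ^ q * (Nat.factorial ((p : ℕ) - q) : ℝ))
      = (c p * (Δt⁻¹) ^ (p : ℕ) / 2) * ∑ q ∈ Finset.range ((p : ℕ) + 1),
        Δt ^ ((p : ℕ) - q) * (-1 : ℝ) ^ q * (Nat.factorial (p : ℕ) : ℝ) /
          ((2 * abar) ^ q * (Nat.factorial ((p : ℕ) - q) : ℝ)) := by
    intro p
    rw [Finset.mul_sum, Finset.mul_sum]
    refine Finset.sum_congr rfl fun q hq => ?_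
    have hq' : q ≤ (p : ℕ) := Nat.lt_succ_iff.mp (Finset.mem_range.mp hq)
    have key : (Δt⁻¹) ^ (p : ℕ) * Δt ^ ((p : ℕ) - q) = (Δt⁻¹) ^ q := by
      rw [pow_sub₀ Δt hΔt.ne' hq', inv_pow, inv_pow, ← mul_assoc,
        inv_mul_cancel₀ (pow_ne_zero _ hΔt.ne'), one_mul]
    rw [← key]
    ring
  rw [hu]
  unfold stmtF8
  simp only [hc Δt hΔt]
  rw [Finset.sum_congr rfl fun p (_ : p ∈ Finset.univ) => hterm p]
end
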